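/- For all ξ₁, ξ₂ ∈ (-1, 0), the set of ω ∈ ℂ ∖ 𝒞 satisfying the saddle point equation 1 + ξ₁·ω/√(ω^2+2c) + ξ₂/(ω·√(ω^{-2}+2c)) = 0 has at most four elements. -/

import Mathlib

/-- `c = a/(1+a²)`. -/
noncomputable def cOf (a : ℝ) : ℝ := a / (1 + a ^ 2)

/-- The branch of the logarithm with argument in `(-π/2, 3π/2]`:
`L(z) = Log(-iz) + iπ/2` where `Log` is the principal branch. -/
noncomputable def Lbr (z : ℂ) : ℂ :=
  Complex.log (-Complex.I * z) + Complex.I * ((Real.pi : ℂ) / 2)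

/-- The branch `√(ω² + 2c) = exp((1/2)L(ω + i√(2c)) + (1/2)L(ω - i√(2c)))`. -/
noncomputable def sqBr (a : ℝ) (ω : ℂ) : ℂ :=
  Complex.exp ((1 / 2 : ℂ) * Lbr (ω + Complex.I * (Real.sqrt (2 * cOf a) : ℂ)) +
    (1 / 2 : ℂ) * Lbr (ω - Complex.I * (Real.sqrt (2 * cOf a) : ℂ)))

/-- `G(ω) = (ω - √(ω² + 2c))/√(2c)`. -/
noncomputable def Gbr (a : ℝ) (ω : ℂ) : ℂ :=
  (ω - sqBr a ω) / (Real.sqrt (2 * cOf a) : ℂ)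

/-- The branch cuts `𝒞 = i·((-∞, -1/√(2c)] ∪ [-√(2c), √(2c)] ∪ [1/√(2c), ∞))`. -/
def cuts (a : ℝ) : Set ℂ :=
  {z : ℂ | ∃ t : ℝ, z = Complex.I * (t : ℂ) ∧
    (t ≤ -(1 / Real.sqrt (2 * cOf a)) ∨
      (-Real.sqrt (2 * cOf a) ≤ t ∧ t ≤ Real.sqrt (2 * cOf a)) ∨
      1 / Real.sqrt (2 * cOf a) ≤ t)}

/-- The branch of the logarithm with argument in `(0, 2π]`: `L₃(z) = Log(-z) + iπ`. -/
noncomputable def L3 (z : ℂ) : ℂ := Complex.log (-z) + Complex.I * (Real.pi : ℂ)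

/-- The saddle point function `g_ξ(ω) = L(ω) - ξ·L(G(ω)) + ξ·L₃(G(1/ω))`. -/
noncomputable def gxi (a ξ : ℝ) (ω : ℂ) : ℂ :=
  Lbr ω - (ξ : ℂ) * Lbr (Gbr a ω) + (ξ : ℂ) * L3 (Gbr a ω⁻¹)

/-- The saddle point equation `1 + ξ₁·ω/√(ω²+2c) + ξ₂/(ω·√(ω⁻²+2c)) = 0`. -/
def saddleEq (a ξ₁ ξ₂ : ℝ) (ω : ℂ) : Prop :=
  1 + (ξ₁ : ℂ) * ω / sqBr a ω + (ξ₂ : ℂ) / (ω * sqBr a ω⁻¹) = 0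

lemma Lbr_im (z : ℂ) : (Lbr z).im = (-Complex.I * z).arg + Real.pi / 2 := by
  simp [Lbr, Complex.add_im, Complex.log_im, Complex.mul_im]

lemma exp_Lbr (z : ℂ) (hz : z ≠ 0) : Complex.exp (Lbr z) = z := by
  rw [Lbr, Complex.exp_add,
    Complex.exp_log (by simp [hz, Complex.I_ne_zero] : -Complex.I * z ≠ 0)]
  have h : Complex.I * ((Real.pi : ℂ) / 2) = ((Real.pi/2 : ℝ) : ℂ) * Complex.I := by
    push_cast; ring
  rw [h, Complex.exp_mul_I, ← Complex.ofReal_cos, ← Complex.ofReal_sin,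
    Real.cos_pi_div_two, Real.sin_pi_div_two]
  simp only [Complex.ofReal_zero, Complex.ofReal_one, zero_add, one_mul]
  linear_combination (-z) * Complex.I_sq

lemma cpow_half_sq (z : ℂ) : (z ^ ((1:ℂ)/2))^2 = z := by
  by_cases hz : z = 0
  · rw [hz, Complex.zero_cpow (by norm_num : (1:ℂ)/2 ≠ 0)]; ring
  · rw [sq, ← Complex.cpow_add _ _ hz, show (1:ℂ)/2 + 1/2 = 1 by norm_num, Complex.cpow_one]

lemma re_mul_conj_comm (a b : ℂ) : (a * (starRingEnd ℂ) b).re = (b * (starRingEnd ℂ) a).re := by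
  simp [Complex.mul_re, Complex.conj_re, Complex.conj_im]; ring

lemma key_re_pos (r : ℝ) (hr : 0 < r) (ω : ℂ)
    (h : ω.re ≠ 0 ∨ r < |ω.im|) :
    0 < (ω * (starRingEnd ℂ) (Complex.exp ((1/2 : ℂ) * Lbr (ω + Complex.I * (r:ℂ)) +
      (1/2 : ℂ) * Lbr (ω - Complex.I * (r:ℂ))))).re := by
  set x := ω.re with hx
  set y := ω.im with hy
  set w₁ : ℂ := -Complex.I * (ω + Complex.I * (r:ℂ)) with hw₁
  set w₂ : ℂ := -Complex.I * (ω - Complex.I * (r:ℂ)) with hw₂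
  have hw₁re : w₁.re = y + r := by simp [hw₁, Complex.mul_re, Complex.add_im, Complex.add_re, hy]
  have hw₁im : w₁.im = -x := by simp [hw₁, Complex.mul_im, Complex.add_re, Complex.add_im, hx]
  have hw₂re : w₂.re = y - r := by simp [hw₂, Complex.mul_re, Complex.sub_im, Complex.sub_re, hy]
  have hw₂im : w₂.im = -x := by simp [hw₂, Complex.mul_im, Complex.sub_re, Complex.sub_im, hx]
  have hw₁0 : w₁ ≠ 0 := by
    intro h0
    have h1 := congrArg Complex.re h0
    have h2 := congrArg Complex.im h0
    rw [hw₁re] at h1; rw [hw₁im] at h2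
    simp at h1 h2
    rcases h with hx0 | hyr
    · exact hx0 (by linarith)
    · rw [_root_.abs_of_nonpos (by linarith)] at hyr; linarith
  have hw₂0 : w₂ ≠ 0 := by
    intro h0
    have h1 := congrArg Complex.re h0
    have h2 := congrArg Complex.im h0
    rw [hw₂re] at h1; rw [hw₂im] at h2
    simp at h1 h2
    rcases h with hx0 | hyr
    · exact hx0 (by linarith)
    · rw [_root_.abs_of_nonneg (by linarith)] at hyr; linarith
  set R₁ := ‖w₁‖ with hR₁
  set R₂ := ‖w₂‖ with hR₂
  have hR₁0 : 0 < R₁ := by simpa [hR₁] using hw₁0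
  have hR₂0 : 0 < R₂ := by simpa [hR₂] using hw₂0
  set θ₁ := w₁.arg + Real.pi / 2 with hθ₁
  set θ₂ := w₂.arg + Real.pi / 2 with hθ₂
  set φ := (θ₁ + θ₂) / 2 with hφ
  set δ := (θ₁ - θ₂) / 2 with hδ
  -- trig values
  have hcos₁ : Real.cos θ₁ = x / R₁ := by
    rw [hθ₁, Real.cos_add_pi_div_two, Complex.sin_arg, hw₁im, ← hR₁]; field_simp
  have hsin₁ : Real.sin θ₁ = (y + r) / R₁ := by
    rw [hθ₁, Real.sin_add_pi_div_two, Complex.cos_arg hw₁0, hw₁re]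
  have hcos₂ : Real.cos θ₂ = x / R₂ := by
    rw [hθ₂, Real.cos_add_pi_div_two, Complex.sin_arg, hw₂im, ← hR₂]; field_simp
  have hsin₂ : Real.sin θ₂ = (y - r) / R₂ := by
    rw [hθ₂, Real.sin_add_pi_div_two, Complex.cos_arg hw₂0, hw₂re]
  -- argument difference bound
  have hdiff : |w₁.arg - w₂.arg| < Real.pi := by
    rcases lt_trichotomy x 0 with hneg | hzero | hpos
    · have s₁ : 0 < Real.sin w₁.arg := by
        rw [Complex.sin_arg, hw₁im]; exact div_pos (by linarith) hR₁0
      have s₂ : 0 < Real.sin w₂.arg := by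
        rw [Complex.sin_arg, hw₂im]; exact div_pos (by linarith) hR₂0
      have a₁ : 0 < w₁.arg := by
        by_contra hc; push_neg at hc
        have := Real.sin_nonpos_of_nonpos_of_neg_pi_le hc (by linarith [Complex.neg_pi_lt_arg w₁])
        linarith
      have a₂ : 0 < w₂.arg := by
        by_contra hc; push_neg at hc
        have := Real.sin_nonpos_of_nonpos_of_neg_pi_le hc (by linarith [Complex.neg_pi_lt_arg w₂])
        linarith
      refine abs_lt.mpr ⟨?_, ?_⟩ <;>
        linarith [Complex.arg_le_pi w₁, Complex.arg_le_pi w₂]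
    · rcases h with hx0 | hyr
      · exact absurd hzero hx0
      rcases lt_abs.mp hyr with hyp | hyn
      · have a₁ : w₁.arg = 0 := Complex.arg_eq_zero_iff.mpr ⟨by rw [hw₁re]; linarith, by rw [hw₁im, hzero]; ring⟩
        have a₂ : w₂.arg = 0 := Complex.arg_eq_zero_iff.mpr ⟨by rw [hw₂re]; linarith, by rw [hw₂im, hzero]; ring⟩
        rw [a₁, a₂]; simpa using Real.pi_pos
      · have a₁ : w₁.arg = Real.pi := Complex.arg_eq_pi_iff.mpr ⟨by rw [hw₁re]; linarith, by rw [hw₁im, hzero]; ring⟩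
        have a₂ : w₂.arg = Real.pi := Complex.arg_eq_pi_iff.mpr ⟨by rw [hw₂re]; linarith, by rw [hw₂im, hzero]; ring⟩
        rw [a₁, a₂]; simpa using Real.pi_pos
    · have s₁ : Real.sin w₁.arg < 0 := by
        rw [Complex.sin_arg, hw₁im]
        exact div_neg_of_neg_of_pos (by linarith) hR₁0
      have s₂ : Real.sin w₂.arg < 0 := by
        rw [Complex.sin_arg, hw₂im]
        exact div_neg_of_neg_of_pos (by linarith) hR₂0
      have a₁ : w₁.arg < 0 := by
        by_contra hc; push_neg at hc
        have := Real.sin_nonneg_of_nonneg_of_le_pi hc (Complex.arg_le_pi w₁)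
        linarith
      have a₂ : w₂.arg < 0 := by
        by_contra hc; push_neg at hc
        have := Real.sin_nonneg_of_nonneg_of_le_pi hc (Complex.arg_le_pi w₂)
        linarith
      refine abs_lt.mpr ⟨?_, ?_⟩ <;>
        linarith [Complex.neg_pi_lt_arg w₁, Complex.neg_pi_lt_arg w₂]
  have hδeq : δ = (w₁.arg - w₂.arg) / 2 := by rw [hδ, hθ₁, hθ₂]; ring
  have hδbound : |δ| < Real.pi / 2 := by
    rw [hδeq]
    obtain ⟨hd1, hd2⟩ := abs_lt.mp hdiff
    refine abs_lt.mpr ⟨by linarith, by linarith⟩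
  have hcosδ : 0 < Real.cos δ := by
    apply Real.cos_pos_of_mem_Ioo
    constructor <;> [linarith [(abs_lt.mp hδbound).1] ; linarith [(abs_lt.mp hδbound).2]]
  -- the exponent
  set u := (1/2 : ℂ) * Lbr (ω + Complex.I * (r:ℂ)) + (1/2 : ℂ) * Lbr (ω - Complex.I * (r:ℂ)) with hu
  have h12 : (1/2 : ℂ) = ((1/2 : ℝ) : ℂ) := by norm_num
  have him : u.im = φ := by
    rw [hu, h12, Complex.add_im, Complex.im_ofReal_mul, Complex.im_ofReal_mul,
      Lbr_im, Lbr_im, ← hw₁, ← hw₂, hφ, hθ₁, hθ₂]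
    ring
  have hre : (ω * (starRingEnd ℂ) (Complex.exp u)).re =
      Real.exp u.re * (x * Real.cos u.im + y * Real.sin u.im) := by
    simp [Complex.mul_re, Complex.conj_re, Complex.conj_im, Complex.exp_re, Complex.exp_im]
    ring
  rw [hre, him]
  -- the trig identity
  have c1 : Real.cos δ = Real.cos θ₁ * Real.cos φ + Real.sin θ₁ * Real.sin φ := by
    have : δ = θ₁ - φ := by rw [hδ, hφ]; ring
    rw [this, Real.cos_sub]
  have c2 : Real.cos δ = Real.cos θ₂ * Real.cos φ + Real.sin θ₂ * Real.sin φ := by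
    have : δ = -(θ₂ - φ) := by rw [hδ, hφ]; ring
    rw [this, Real.cos_neg, Real.cos_sub]
  have e1 : R₁ * Real.cos δ = x * Real.cos φ + (y + r) * Real.sin φ := by
    rw [c1, hcos₁, hsin₁]; field_simp
  have e2 : R₂ * Real.cos δ = x * Real.cos φ + (y - r) * Real.sin φ := by
    rw [c2, hcos₂, hsin₂]; field_simp
  have hident : x * Real.cos φ + y * Real.sin φ = (R₁ + R₂) / 2 * Real.cos δ := by linarith
  rw [hident]
  have : 0 < (R₁ + R₂) / 2 := by linarith
  positivity


lemma sqBr_ne_zero (a : ℝ) (ω : ℂ) : sqBr a ω ≠ 0 := Complex.exp_ne_zero _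

lemma sqBr_sq (a : ℝ) (hc : 0 ≤ 2 * cOf a) (ω : ℂ)
    (h1 : ω + Complex.I * (Real.sqrt (2 * cOf a) : ℂ) ≠ 0)
    (h2 : ω - Complex.I * (Real.sqrt (2 * cOf a) : ℂ) ≠ 0) :
    (sqBr a ω)^2 = ω^2 + ((2 * cOf a : ℝ) : ℂ) := by
  have key : (sqBr a ω)^2 = (ω + Complex.I * (Real.sqrt (2 * cOf a) : ℂ)) *
      (ω - Complex.I * (Real.sqrt (2 * cOf a) : ℂ)) := by
    rw [sqBr, sq, ← Complex.exp_add]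
    have h3 : (1/2 : ℂ) * Lbr (ω + Complex.I * (Real.sqrt (2 * cOf a) : ℂ)) +
        (1/2 : ℂ) * Lbr (ω - Complex.I * (Real.sqrt (2 * cOf a) : ℂ)) +
        ((1/2 : ℂ) * Lbr (ω + Complex.I * (Real.sqrt (2 * cOf a) : ℂ)) +
        (1/2 : ℂ) * Lbr (ω - Complex.I * (Real.sqrt (2 * cOf a) : ℂ))) =
        Lbr (ω + Complex.I * (Real.sqrt (2 * cOf a) : ℂ)) +
        Lbr (ω - Complex.I * (Real.sqrt (2 * cOf a) : ℂ)) := by ring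
    rw [h3, Complex.exp_add, exp_Lbr _ h1, exp_Lbr _ h2]
  rw [key]
  have hr2 : ((Real.sqrt (2 * cOf a) : ℝ) : ℂ)^2 = ((2 * cOf a : ℝ) : ℂ) := by
    rw [← Complex.ofReal_pow, Real.sq_sqrt hc]
  linear_combination (-((Real.sqrt (2 * cOf a) : ℝ) : ℂ)^2) * Complex.I_sq + hr2

set_option maxHeartbeats 1000000 in
/-- For all `ξ₁, ξ₂ ∈ (-1, 0)`, the set of `ω ∈ ℂ ∖ 𝒞` satisfying the
saddle point equation `1 + ξ₁·ω/√(ω²+2c) + ξ₂/(ω·√(ω⁻²+2c)) = 0` has at most four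
elements. -/
theorem statement5 (a : ℝ) (ha0 : 0 < a) (ha1 : a < 1) (ξ₁ ξ₂ : ℝ)
    (hξ₁ : -1 < ξ₁) (hξ₁' : ξ₁ < 0) (hξ₂ : -1 < ξ₂) (hξ₂' : ξ₂ < 0) :
    ∃ S : Finset ℂ, S.card ≤ 4 ∧
      {ω : ℂ | ω ∉ cuts a ∧ saddleEq a ξ₁ ξ₂ ω} ⊆ ↑S := by
  classical
  have hc0 : 0 < cOf a := div_pos ha0 (by positivity)
  have hclt : cOf a < 1/2 := by
    rw [cOf, div_lt_iff₀ (by positivity)]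
    nlinarith [sq_nonneg (1 - a)]
  set c := cOf a with hcdef
  clear_value c
  have h2c0 : (0:ℝ) < 2*c := by linarith
  have hr0 : 0 < Real.sqrt (2*c) := Real.sqrt_pos.mpr h2c0
  set r := Real.sqrt (2*c) with hrdef
  clear_value r
  have hr2 : r^2 = 2*c := by rw [hrdef]; exact Real.sq_sqrt (le_of_lt h2c0)
  have hr1 : r < 1 := by nlinarith
  set k := 1 - 4*c^2 with hkdef
  clear_value k
  have hk0 : 0 < k := by nlinarith
  have hx1 : ξ₁^2 < 1 := by nlinarith
  have hx2 : ξ₂^2 < 1 := by nlinarith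
  have hx1pos : 0 < ξ₁^2 := by nlinarith
  have hx2pos : 0 < ξ₂^2 := by nlinarith
  have hx1ne : ξ₁ ≠ 0 := ne_of_lt hξ₁'
  -- the quartic polynomial
  set Qp : Polynomial ℝ := Polynomial.C (ξ₂^2) * (Polynomial.C (ξ₁^2) - Polynomial.X^2) -
      (1 + Polynomial.X)^2 * (Polynomial.C (ξ₁^2) - Polynomial.X^2) -
      Polynomial.C (4*c^2) * (Polynomial.X^2 * (1 + Polynomial.X)^2) with hQp
  clear_value Qp
  have hQeval : ∀ x : ℝ, Qp.eval x =
      ξ₂^2*(ξ₁^2 - x^2) - (1+x)^2*(ξ₁^2 - x^2) - 4*c^2*(x^2*(1+x)^2) := by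
    intro x; rw [hQp]; simp
  have hQaeval : ∀ z : ℂ, Polynomial.aeval z Qp =
      (ξ₂:ℂ)^2*((ξ₁:ℂ)^2 - z^2) - (1+z)^2*((ξ₁:ℂ)^2 - z^2) - 4*(c:ℂ)^2*(z^2*(1+z)^2) := by
    intro z; rw [hQp]; simp
  have hQne : Qp ≠ 0 := by
    intro h0
    have h1 := hQeval (-1)
    rw [h0] at h1
    simp only [Polynomial.eval_zero] at h1
    nlinarith [h1]
  have hdeg : Qp.natDegree ≤ 4 := by rw [hQp]; compute_degree
  -- IVT roots outside the strip
  set M := 3/k with hMdef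
  clear_value M
  have hM3 : 3 ≤ M := by
    rw [hMdef, le_div_iff₀ hk0]; nlinarith
  have hQM : 0 < Qp.eval M := by
    rw [hQeval]
    have hkM : k*M = 3 := by rw [hMdef]; field_simp
    have f0 : 4*c^2*(M^2*(1+M)^2) = (1-k)*(M^2*(1+M)^2) := by
      rw [hkdef]; ring
    have f3 : k*(M^2*(1+M)^2) = 3*(M*(1+M)^2) := by linear_combination (M*(1+M)^2)*hkM
    have f1 : 0 ≤ (1 - ξ₂^2) * M^2 := mul_nonneg (by linarith) (sq_nonneg M)
    have f2 : 0 ≤ (1 - ξ₁^2) * ((1+M)^2) := mul_nonneg (by linarith) (sq_nonneg (1+M))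
    have f4 : 0 ≤ ξ₁^2*ξ₂^2 := by positivity
    have g1 : M^2 ≤ (1+M)^2 := by nlinarith
    have g2 : 9*(1+M)^2 ≤ 3*(M*(1+M)^2) := by nlinarith [sq_nonneg (1+M)]
    nlinarith [f0, f1, f2, f3, f4, g1, g2]
  have hQMneg : 0 < Qp.eval (-M) := by
    rw [hQeval]
    have hkM : k*M = 3 := by rw [hMdef]; field_simp
    have f0 : 4*c^2*(M^2*(M-1)^2) = (1-k)*(M^2*(M-1)^2) := by rw [hkdef]; ring
    have f3 : k*(M^2*(M-1)^2) = 3*(M*(M-1)^2) := by linear_combination (M*(M-1)^2)*hkM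
    have f1 : 0 ≤ (1 - ξ₂^2) * M^2 := mul_nonneg (by linarith) (sq_nonneg M)
    have f2 : 0 ≤ (1 - ξ₁^2) * ((M-1)^2) := mul_nonneg (by linarith) (sq_nonneg (M-1))
    have f4 : 0 ≤ ξ₁^2*ξ₂^2 := by positivity
    have g1 : M^2 ≤ 8*(M-1)^2 := by nlinarith
    have g2 : 9*(M-1)^2 ≤ 3*(M*(M-1)^2) := by nlinarith [sq_nonneg (M-1)]
    nlinarith [f0, f1, f2, f3, f4, g1, g2]
  have hQ0 : Qp.eval 0 < 0 := by rw [hQeval]; nlinarith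
  have hQm1 : Qp.eval (-1) < 0 := by rw [hQeval]; nlinarith
  have hcont : Continuous fun x : ℝ => Qp.eval x := Qp.continuous
  obtain ⟨v, hvmem, hveq⟩ : ∃ v ∈ Set.Icc (0:ℝ) M, Qp.eval v = 0 := by
    have h := intermediate_value_Icc (by linarith : (0:ℝ) ≤ M) hcont.continuousOn
    have h0 : (0:ℝ) ∈ Set.Icc (Qp.eval 0) (Qp.eval M) := ⟨le_of_lt hQ0, le_of_lt hQM⟩
    obtain ⟨v, hv1, hv2⟩ := h h0
    exact ⟨v, hv1, hv2⟩
  obtain ⟨u, humem, hueq⟩ : ∃ u ∈ Set.Icc (-M) (-1:ℝ), Qp.eval u = 0 := by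
    have h := intermediate_value_Icc' (by linarith : (-M:ℝ) ≤ -1) hcont.continuousOn
    have h0 : (0:ℝ) ∈ Set.Icc (Qp.eval (-1)) (Qp.eval (-M)) := ⟨le_of_lt hQm1, le_of_lt hQMneg⟩
    obtain ⟨u, hu1, hu2⟩ := h h0
    exact ⟨u, hu1, hu2⟩
  -- root finsets
  have haroots : ∀ t : ℝ, Qp.eval t = 0 → ((t:ℝ):ℂ) ∈ Qp.aroots ℂ := by
    intro t ht
    rw [Polynomial.mem_aroots]
    refine ⟨hQne, ?_⟩
    rw [show ((t:ℝ):ℂ) = algebraMap ℝ ℂ t from rfl, Polynomial.aeval_algebraMap_apply]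
    simp [ht]
  set Rf : Finset ℂ := (Qp.aroots ℂ).toFinset with hRf
  set Rs : Finset ℂ := Rf.filter (fun z => -1 < z.re ∧ z.re < 0) with hRs
  have hRfcard : Rf.card ≤ 4 := by
    refine le_trans (Multiset.toFinset_card_le _) (le_trans (Polynomial.card_roots' _) ?_)
    exact le_trans Polynomial.natDegree_map_le hdeg
  have huRf : ((u:ℝ):ℂ) ∈ Rf := Multiset.mem_toFinset.mpr (haroots u hueq)
  have hvRf : ((v:ℝ):ℂ) ∈ Rf := Multiset.mem_toFinset.mpr (haroots v hveq)
  have huv : ((u:ℝ):ℂ) ≠ ((v:ℝ):ℂ) := by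
    simp only [ne_eq, Complex.ofReal_inj]
    intro h; rw [h] at humem
    have := humem.2; have := hvmem.1; linarith
  have huRs : ((u:ℝ):ℂ) ∉ Rs := by
    rw [hRs, Finset.mem_filter]
    rintro ⟨-, h1, -⟩
    rw [Complex.ofReal_re] at h1
    have := humem.2; linarith
  have hvRs : ((v:ℝ):ℂ) ∉ Rs := by
    rw [hRs, Finset.mem_filter]
    rintro ⟨-, -, h2⟩
    rw [Complex.ofReal_re] at h2
    have := hvmem.1; linarith
  have hRscard : Rs.card ≤ 2 := by
    have hsub : Rs ∪ {((u:ℝ):ℂ), ((v:ℝ):ℂ)} ⊆ Rf := by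
      intro z hz
      rcases Finset.mem_union.mp hz with hz | hz
      · exact Finset.mem_of_mem_filter z hz
      · rcases Finset.mem_insert.mp hz with hz | hz
        · rw [hz]; exact huRf
        · rw [Finset.mem_singleton.mp hz]; exact hvRf
    have hdisj : Disjoint Rs {((u:ℝ):ℂ), ((v:ℝ):ℂ)} := by
      rw [Finset.disjoint_right]
      intro z hz
      rcases Finset.mem_insert.mp hz with hz | hz
      · rw [hz]; exact huRs
      · rw [Finset.mem_singleton.mp hz]; exact hvRs
    have hcu : (Rs ∪ {((u:ℝ):ℂ), ((v:ℝ):ℂ)}).card = Rs.card + 2 := by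
      rw [Finset.card_union_of_disjoint hdisj, Finset.card_pair huv]
    have := Finset.card_le_card hsub
    omega
  -- the candidate finset
  set msq : ℂ → ℂ := fun X => (2*(c:ℂ)*X^2/((ξ₁:ℂ)^2 - X^2)) ^ ((1:ℂ)/2) with hmsq
  refine ⟨Rs.biUnion (fun X => {msq X, -msq X}), ?_, ?_⟩
  · have hb1 : (Rs.biUnion (fun X => {msq X, -msq X})).card ≤
        ∑ x ∈ Rs, ({msq x, -msq x} : Finset ℂ).card := Finset.card_biUnion_le
    have hb2 : ∑ x ∈ Rs, ({msq x, -msq x} : Finset ℂ).card ≤ Rs.card * 2 := by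
      refine le_trans (Finset.sum_le_card_nsmul Rs _ 2 ?_) (by simp [smul_eq_mul])
      intro x _
      exact le_trans (Finset.card_insert_le _ _) (by simp)
    omega
  -- membership
  intro ω hω
  obtain ⟨hωcuts, heq⟩ := hω
  rw [saddleEq] at heq
  -- basic nonvanishing
  have hmemcuts : ∀ t : ℝ, (-r ≤ t ∧ t ≤ r) ∨ 1/r ≤ |t| → Complex.I * (t:ℂ) ∈ cuts a := by
    intro t ht
    refine ⟨t, rfl, ?_⟩
    rw [← hcdef, ← hrdef]
    rcases ht with ⟨h1, h2⟩ | h1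
    · exact Or.inr (Or.inl ⟨h1, h2⟩)
    · rcases abs_cases t with ⟨hh, -⟩ | ⟨hh, -⟩
      · exact Or.inr (Or.inr (by rw [← hh]; exact h1))
      · exact Or.inl (by rw [hh] at h1; linarith)
  have hω0 : ω ≠ 0 := by
    intro h0
    exact hωcuts (by rw [h0]; simpa using hmemcuts 0 (Or.inl ⟨by linarith, by linarith⟩))
  have hIim : ∀ z : ℂ, z.re = 0 → z = Complex.I * ((z.im : ℝ):ℂ) := by
    intro z hz
    apply Complex.ext <;> simp [Complex.mul_re, Complex.mul_im, hz]
  have hcond₁ : ω.re ≠ 0 ∨ r < |ω.im| := by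
    by_contra hcon
    push_neg at hcon
    obtain ⟨h1, h2⟩ := hcon
    refine hωcuts ?_
    rw [hIim ω h1]
    exact hmemcuts ω.im (Or.inl (abs_le.mp h2))
  have hcond₂ : (ω⁻¹).re ≠ 0 ∨ r < |(ω⁻¹).im| := by
    by_contra hcon
    push_neg at hcon
    obtain ⟨h1, h2⟩ := hcon
    have hinv0 : ω⁻¹ ≠ 0 := inv_ne_zero hω0
    set t₀ := (ω⁻¹).im with ht₀
    have ht₀0 : t₀ ≠ 0 := by
      intro h
      exact hinv0 (by rw [hIim ω⁻¹ h1, ← ht₀, h]; simp)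
    have hωeq : ω = Complex.I * ((-1/t₀ : ℝ):ℂ) := by
      have h3 : ω⁻¹ = Complex.I * ((t₀ : ℝ):ℂ) := hIim ω⁻¹ h1
      rw [← inv_inv ω, h3]
      rw [mul_inv]
      rw [Complex.inv_I]
      push_cast
      field_simp
    refine hωcuts ?_
    rw [hωeq]
    refine hmemcuts (-1/t₀) (Or.inr ?_)
    rw [abs_div, abs_neg, abs_one]
    rw [div_le_div_iff₀ hr0 (abs_pos.mpr ht₀0)]
    rw [ht₀] at h2 ⊢
    nlinarith [abs_nonneg (ω⁻¹).im]
  have hIr_cuts : ∀ ε : ℝ, |ε| ≤ r → Complex.I * ((ε:ℝ):ℂ) ∈ cuts a :=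
    fun ε hε => hmemcuts ε (Or.inl (abs_le.mp hε))
  have hz₁ : ω + Complex.I * ((r:ℝ):ℂ) ≠ 0 := by
    intro h0
    refine hωcuts ?_
    have : ω = Complex.I * ((-r:ℝ):ℂ) := by push_cast; linear_combination h0
    rw [this]
    exact hIr_cuts (-r) (by rw [abs_neg, abs_of_pos hr0])
  have hz₂ : ω - Complex.I * ((r:ℝ):ℂ) ≠ 0 := by
    intro h0
    refine hωcuts ?_
    have : ω = Complex.I * ((r:ℝ):ℂ) := by linear_combination h0
    rw [this]
    exact hIr_cuts r (by rw [abs_of_pos hr0])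
  have hinv_cuts : ∀ ε : ℝ, ε ≠ 0 → |ε| ≤ r → ω⁻¹ ≠ Complex.I * ((ε:ℝ):ℂ) := by
    intro ε hε0 hεr h0
    have hωeq : ω = Complex.I * ((-1/ε : ℝ):ℂ) := by
      rw [← inv_inv ω, h0, mul_inv, Complex.inv_I]
      push_cast
      field_simp
    refine hωcuts ?_
    rw [hωeq]
    refine hmemcuts (-1/ε) (Or.inr ?_)
    rw [abs_div, abs_neg, abs_one, div_le_div_iff₀ hr0 (abs_pos.mpr hε0)]
    nlinarith [abs_nonneg ε, abs_pos.mpr hε0]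
  have hz₃ : ω⁻¹ + Complex.I * ((r:ℝ):ℂ) ≠ 0 := by
    intro h0
    refine hinv_cuts (-r) (by linarith) (by rw [abs_neg, abs_of_pos hr0]) ?_
    push_cast
    linear_combination h0
  have hz₄ : ω⁻¹ - Complex.I * ((r:ℝ):ℂ) ≠ 0 := by
    intro h0
    refine hinv_cuts r (by linarith) (by rw [abs_of_pos hr0]) ?_
    linear_combination h0
  -- square identities
  have h2cnn : 0 ≤ 2 * cOf a := by rw [← hcdef]; linarith
  have hs2 : (sqBr a ω)^2 = ω^2 + 2*(c:ℂ) := by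
    rw [sqBr_sq a h2cnn ω (by rw [← hcdef, ← hrdef]; exact hz₁) (by rw [← hcdef, ← hrdef]; exact hz₂)]
    rw [← hcdef]; push_cast; ring
  have ht2 : (sqBr a ω⁻¹)^2 = (ω⁻¹)^2 + 2*(c:ℂ) := by
    rw [sqBr_sq a h2cnn ω⁻¹ (by rw [← hcdef, ← hrdef]; exact hz₃) (by rw [← hcdef, ← hrdef]; exact hz₄)]
    rw [← hcdef]; push_cast; ring
  set s := sqBr a ω with hsdef
  set t' := sqBr a ω⁻¹ with htdef
  have hs0 : s ≠ 0 := Complex.exp_ne_zero _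
  have ht0 : t' ≠ 0 := Complex.exp_ne_zero _
  -- positivity of real parts
  have hres : 0 < (ω * (starRingEnd ℂ) s).re := by
    rw [hsdef, sqBr, ← hcdef, ← hrdef]
    exact key_re_pos r hr0 ω hcond₁
  have hret : 0 < (ω⁻¹ * (starRingEnd ℂ) t').re := by
    rw [htdef, sqBr, ← hcdef, ← hrdef]
    exact key_re_pos r hr0 ω⁻¹ hcond₂
  have hdivre : 0 < (ω / s).re := by
    have hh : (ω / s).re = (ω * (starRingEnd ℂ) s).re / Complex.normSq s := by
      rw [Complex.div_re, Complex.mul_re, Complex.conj_re, Complex.conj_im]; ring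
    rw [hh]
    exact div_pos hres (Complex.normSq_pos.mpr hs0)
  have hmulre : 0 < (ω * t').re := by
    have h1 : ω * t' = ((Complex.normSq ω⁻¹)⁻¹ : ℝ) * (t' * (starRingEnd ℂ) ω⁻¹) := by
      nth_rewrite 1 [← inv_inv ω]
      rw [Complex.inv_def]
      push_cast
      ring
    rw [h1, Complex.re_ofReal_mul]
    have h2 : (t' * (starRingEnd ℂ) ω⁻¹).re = (ω⁻¹ * (starRingEnd ℂ) t').re :=
      re_mul_conj_comm _ _
    rw [h2]
    have h3 : 0 < (Complex.normSq ω⁻¹)⁻¹ :=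
      inv_pos.mpr (Complex.normSq_pos.mpr (inv_ne_zero hω0))
    exact mul_pos h3 hret
  have hωt0 : ω * t' ≠ 0 := mul_ne_zero hω0 ht0
  -- X and Y
  set X := (ξ₁:ℂ) * ω / s with hXdef
  set Y := (ξ₂:ℂ) / (ω * t') with hYdef
  have hXre : X.re < 0 := by
    rw [hXdef, mul_div_assoc, Complex.re_ofReal_mul]
    exact mul_neg_of_neg_of_pos hξ₁' hdivre
  have hYre : Y.re < 0 := by
    rw [hYdef, div_eq_mul_inv, Complex.re_ofReal_mul]
    refine mul_neg_of_neg_of_pos hξ₂' ?_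
    rw [Complex.inv_re]
    exact div_pos hmulre (Complex.normSq_pos.mpr hωt0)
  have heq' : (1:ℂ) + X + Y = 0 := heq
  have hXre' : -1 < X.re := by
    have h1 : ((1:ℂ) + X + Y).re = 0 := by rw [heq']; rfl
    simp only [Complex.add_re, Complex.one_re] at h1
    linarith
  have hY : Y = -1 - X := by linear_combination heq'
  -- algebra
  have hXs : X * s = (ξ₁:ℂ) * ω := by
    rw [hXdef]; field_simp
  have h1alg : ω^2*((ξ₁:ℂ)^2 - X^2) = 2*(c:ℂ)*X^2 := by
    have h := hs2
    have h2 : X^2*(ω^2 + 2*(c:ℂ)) = (ξ₁:ℂ)^2*ω^2 := by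
      rw [← h]; linear_combination (X*s + (ξ₁:ℂ)*ω) * hXs
    linear_combination -h2
  have hne2 : (ξ₁:ℂ)^2 - X^2 ≠ 0 := by
    intro h0
    have hX0 : X = 0 := by
      have h1 : 2*(c:ℂ)*X^2 = 0 := by rw [← h1alg, h0, mul_zero]
      have h2 : (2*(c:ℂ)) ≠ 0 := by
        simp only [ne_eq, mul_eq_zero]
        push_neg
        exact ⟨two_ne_zero, Complex.ofReal_ne_zero.mpr (ne_of_gt hc0)⟩
      have := mul_eq_zero.mp h1
      rcases this with h | h
      · exact absurd h h2
      · exact pow_eq_zero_iff (by norm_num) |>.mp h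
    rw [hX0] at h0
    simp only [ne_eq, OfNat.ofNat_ne_zero, not_false_eq_true, zero_pow, sub_zero,
      pow_eq_zero_iff, Complex.ofReal_eq_zero] at h0
    exact hx1ne h0
  have hω2 : ω^2 = 2*(c:ℂ)*X^2/((ξ₁:ℂ)^2 - X^2) := by
    rw [eq_div_iff hne2]; linear_combination h1alg
  have hYt : Y * (ω * t') = (ξ₂:ℂ) := by
    rw [hYdef]; field_simp
  have hωt2 : (ω*t')^2 = 1 + 2*(c:ℂ)*ω^2 := by
    rw [mul_pow, ht2, mul_add, ← mul_pow, mul_inv_cancel₀ hω0]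
    ring
  have h2alg : (1+X)^2*(1 + 2*(c:ℂ)*ω^2) = (ξ₂:ℂ)^2 := by
    have h3 : Y^2*(ω*t')^2 = (ξ₂:ℂ)^2 := by
      linear_combination (Y*(ω*t') + (ξ₂:ℂ)) * hYt
    rw [hωt2] at h3
    rw [hY] at h3
    linear_combination h3
  have hQX : Polynomial.aeval X Qp = 0 := by
    rw [hQaeval X]
    have h2' : (1+X)^2*((ξ₁:ℂ)^2 - X^2) + (1+X)^2*(2*(c:ℂ))*(2*(c:ℂ)*X^2) = (ξ₂:ℂ)^2*((ξ₁:ℂ)^2 - X^2) := by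
      calc (1+X)^2*((ξ₁:ℂ)^2 - X^2) + (1+X)^2*(2*(c:ℂ))*(2*(c:ℂ)*X^2)
          = (1+X)^2*((ξ₁:ℂ)^2 - X^2) + (1+X)^2*(2*(c:ℂ))*(ω^2*((ξ₁:ℂ)^2 - X^2)) := by
            rw [h1alg]
        _ = ((1+X)^2*(1 + 2*(c:ℂ)*ω^2))*((ξ₁:ℂ)^2 - X^2) := by ring
        _ = (ξ₂:ℂ)^2*((ξ₁:ℂ)^2 - X^2) := by rw [h2alg]
    push_cast
    linear_combination -h2'
  have hXRs : X ∈ Rs := by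
    rw [hRs, Finset.mem_filter]
    refine ⟨Multiset.mem_toFinset.mpr (Polynomial.mem_aroots.mpr ⟨hQne, hQX⟩), hXre', hXre⟩
  have hsq : ω^2 = (msq X)^2 := by
    rw [hmsq]
    simp only
    rw [cpow_half_sq]
    exact hω2
  have : (ω - msq X) * (ω + msq X) = 0 := by linear_combination hsq
  rcases mul_eq_zero.mp this with h | h
  · refine Finset.mem_coe.mpr (Finset.mem_biUnion.mpr ⟨X, hXRs, ?_⟩)
    simp only [Finset.mem_insert, Finset.mem_singleton]
    left
    linear_combination h
  · refine Finset.mem_coe.mpr (Finset.mem_biUnion.mpr ⟨X, hXRs, ?_⟩)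
    simp only [Finset.mem_insert, Finset.mem_singleton]
    right
    linear_combination h
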